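/- Let 0 ≤ δ ≤ d and let i_1 < i_2 < ⋯ < i_δ be unbarred elements of J with i_δ < r (the condition being vacuous when δ = 0), and let i_{δ+1},…,i_d be barred elements of J. Then in Λ^d ℂ^{2r}: Λ^d(X)(v_{i_1} ∧ ⋯ ∧ v_{i_d}) = Σ_{(j_1,…,j_d) ∈ V} ( ∏_{ζ=1}^{δ} Y_{j_ζ − 1}/Y_{i_ζ} )·( ∏_{ζ=δ+1}^{d} Y_{|i_ζ|}/Y_{|j_ζ| − 1} )·v_{j_1} ∧ ⋯ ∧ v_{j_d}, where V is the set of tuples (j_1,…,j_d) in J with j_ζ ∈ {i_ζ, i_ζ + 1} for 1 ≤ ζ ≤ δ, j_1 < ⋯ < j_δ, and j_ζ barred with |j_ζ| ≤ |i_ζ| for δ+1 ≤ ζ ≤ d. -/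

import Mathlib

noncomputable section
open Matrix BigOperators

namespace CTypeMinors

/-- Standard basis vector of `ℂ^{2r}`, indexed by a natural number `a` (0-indexed):
`a = j - 1` encodes the unbarred element `j ∈ J`, and `a = 2r - j` encodes the barred
element `j̄ ∈ J` (this is the bijection `ι` shifted to be 0-indexed; the natural order
on `{0, …, 2r-1}` corresponds to the total order on `J`). -/
def vv (r a : ℕ) : Fin (2*r) → ℂ := fun k => if (k : ℕ) = a then 1 else 0

/-- `v_j` for unbarred `j` (`1 ≤ j ≤ r`); note `vu r (r+1) = v_{r̄}`. -/
def vu (r j : ℕ) : Fin (2*r) → ℂ := vv r (j - 1)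

/-- `v_{j̄}` for barred `j̄` (`1 ≤ j ≤ r`). -/
def vb (r j : ℕ) : Fin (2*r) → ℂ := vv r (2*r - j)

/-- The matrix `f_i` (`1 ≤ i ≤ r`): `f_i v_i = v_{i+1}`, `f_i v_{(i+1)‾} = v_{ī}`
(for `i = r` these two conditions both read `f_r v_r = v_{r̄}`), all other basis
vectors are sent to `0`. -/
def fMat (r i : ℕ) : Matrix (Fin (2*r)) (Fin (2*r)) ℂ :=
  Matrix.of fun k l =>
    if ((l : ℕ) + 1 = i ∧ (k : ℕ) = i) ∨ ((l : ℕ) + i + 1 = 2*r ∧ (k : ℕ) + i = 2*r)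
    then 1 else 0

/-- `e_i = f_iᵀ`. -/
def eMat (r i : ℕ) : Matrix (Fin (2*r)) (Fin (2*r)) ℂ := (fMat r i)ᵀ

/-- `x_i(t) = 1 + t e_i`. -/
def xMat (r i : ℕ) (t : ℂ) : Matrix (Fin (2*r)) (Fin (2*r)) ℂ := 1 + t • eMat r i

/-- `y_i(t) = 1 + t f_i`. -/
def yMat (r i : ℕ) (t : ℂ) : Matrix (Fin (2*r)) (Fin (2*r)) ℂ := 1 + t • fMat r i

/-- `α_i^∨(c)`: diagonal, acting by `c` on `v_i, v_{(i+1)‾}`, by `c⁻¹` on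
`v_{i+1}, v_{ī}`, and by `1` elsewhere (for `i = r`: by `c` on `v_r`, `c⁻¹` on `v_{r̄}`). -/
def alMat (r i : ℕ) (c : ℂ) : Matrix (Fin (2*r)) (Fin (2*r)) ℂ :=
  Matrix.diagonal fun k =>
    if (k : ℕ) + 1 = i ∨ (k : ℕ) + i + 1 = 2*r then c
    else if (k : ℕ) = i ∨ (k : ℕ) + i = 2*r then c⁻¹
    else 1

/-- `x_{-i}(t) = y_i(t) ⬝ α_i^∨(t⁻¹)`. -/
def xmMat (r i : ℕ) (t : ℂ) : Matrix (Fin (2*r)) (Fin (2*r)) ℂ :=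
  yMat r i t * alMat r i t⁻¹

/-- Entry of a `2r × 2r` matrix at (0-indexed) natural number indices. -/
def ent {r : ℕ} (X : Matrix (Fin (2*r)) (Fin (2*r)) ℂ) (a b : ℕ) : ℂ :=
  dotProduct (vv r a) (X.mulVec (vv r b))

/-- Ordered product `g 1 * g 2 * ⋯ * g n` of matrices. -/
def oprod {N : ℕ} (g : ℕ → Matrix (Fin N) (Fin N) ℂ) (n : ℕ) : Matrix (Fin N) (Fin N) ℂ :=
  ((List.range n).map fun l => g (l + 1)).prod

/-- `x^L(Y) = (x_{-1}(Y_{1,1})⋯x_{-r}(Y_{1,r})) ⋯ x_{-1}(Y_{m,1})⋯x_{-d}(Y_{m,d})`. -/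
def xL (r m d : ℕ) (Y : ℕ → ℕ → ℂ) : Matrix (Fin (2*r)) (Fin (2*r)) ℂ :=
  oprod (fun s => oprod (fun l => xmMat r l (Y s l)) (if s = m then d else r)) m

/-- The 0-indexed row `ι(R_i)` for `i : Fin d` (0-indexed `i`): the `i`-th entry
of `R` is `v_{m'+1+i}` when `(i+1) + m' ≤ r` and `v_{(d-i)‾}` otherwise. -/
def rowR (r m' d i : ℕ) : ℕ := if i + 1 + m' ≤ r then m' + i else 2*r + i - d

/-- `Δ^L(Y)`: determinant of the `d × d` submatrix of `x^L(Y)` with rows `ι(R)` and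
columns `1, …, d`. -/
def DeltaL (r m m' d : ℕ) (Y : ℕ → ℕ → ℂ) : ℂ :=
  (Matrix.of fun i j : Fin d => ent (xL r m d Y) (rowR r m' d (i : ℕ)) (j : ℕ)).det

/-- `C̄(l,k) = Y_{l,k-1}/Y_{l,k}`. -/
def Cbar (Y : ℕ → ℕ → ℂ) (l k : ℕ) : ℂ := Y l (k - 1) / Y l k

/-- `C(l,k) = Y_{l,k+1}/Y_{l+1,k}`. -/
def Cc (Y : ℕ → ℕ → ℂ) (l k : ℕ) : ℂ := Y l (k + 1) / Y (l + 1) k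

/-- `|·| : J → ℕ` in the 0-indexed natural encoding of `J`. -/
def absV (r p : ℕ) : ℕ := if p < r then p + 1 else 2*r - p


section Aux

variable {r : ℕ}

lemma mulVec_vv (M : Matrix (Fin (2*r)) (Fin (2*r)) ℂ) {a : ℕ} (ha : a < 2*r) :
    M.mulVec (vv r a) = fun k => M k ⟨a, ha⟩ := by
  funext k
  simp only [Matrix.mulVec, dotProduct, vv]
  rw [Finset.sum_eq_single (⟨a, ha⟩ : Fin (2*r))]
  · simp
  · intro b _ hb
    rw [if_neg, mul_zero]
    exact fun h => hb (Fin.ext h)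
  · simp

lemma fMat_mulVec (i : ℕ) {a : ℕ} (ha : a < 2*r) :
    (fMat r i).mulVec (vv r a) =
      if a + 1 = i ∨ a + i + 1 = 2*r then vv r (a+1) else 0 := by
  rw [mulVec_vv _ ha]
  funext k
  have hk : (k : ℕ) < 2*r := k.isLt
  by_cases hc : a + 1 = i ∨ a + i + 1 = 2*r
  · rw [if_pos hc]
    simp only [fMat, Matrix.of_apply, vv]
    by_cases hk2 : (k : ℕ) = a + 1
    · rw [if_pos (by omega), if_pos hk2]
    · rw [if_neg (by omega), if_neg hk2]
  · rw [if_neg hc]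
    simp only [fMat, Matrix.of_apply, Pi.zero_apply]
    rw [if_neg (by omega)]

lemma alMat_mulVec (i : ℕ) (c : ℂ) {a : ℕ} (ha : a < 2*r) :
    (alMat r i c).mulVec (vv r a) =
      (if a + 1 = i ∨ a + i + 1 = 2*r then c
       else if a = i ∨ a + i = 2*r then c⁻¹ else 1) • vv r a := by
  unfold alMat
  funext k
  rw [Matrix.mulVec_diagonal]
  simp only [vv, Pi.smul_apply, smul_eq_mul]
  by_cases hk : (k : ℕ) = a
  · rw [hk]
  · rw [if_neg hk, mul_zero, mul_zero]

lemma xm_mulVec (i : ℕ) (t : ℂ) (ht : t ≠ 0) {a : ℕ} (ha : a < 2*r) :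
    (xmMat r i t).mulVec (vv r a) =
      if a + 1 = i ∨ a + i + 1 = 2*r then t⁻¹ • vv r a + vv r (a+1)
      else if a = i ∨ a + i = 2*r then t • vv r a
      else vv r a := by
  unfold xmMat
  rw [← Matrix.mulVec_mulVec, alMat_mulVec i t⁻¹ ha, Matrix.mulVec_smul]
  have hy : (yMat r i t).mulVec (vv r a) =
      vv r a + t • ((fMat r i).mulVec (vv r a)) := by
    unfold yMat
    rw [Matrix.add_mulVec, Matrix.one_mulVec, Matrix.smul_mulVec]
  rw [hy, fMat_mulVec i ha]
  by_cases h1 : a + 1 = i ∨ a + i + 1 = 2*r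
  · rw [if_pos h1, if_pos h1, if_pos h1, smul_add, smul_smul,
      inv_mul_cancel₀ ht, one_smul]
  · rw [if_neg h1, if_neg h1, if_neg h1, smul_zero, add_zero]
    by_cases h2 : a = i ∨ a + i = 2*r
    · rw [if_pos h2, if_pos h2, inv_inv]
    · rw [if_neg h2, if_neg h2, one_smul]

lemma oprod_succ {N : ℕ} (g : ℕ → Matrix (Fin N) (Fin N) ℂ) (n : ℕ) :
    oprod g (n+1) = oprod g n * g (n+1) := by
  unfold oprod
  rw [List.range_succ, List.map_append, List.prod_append]
  simp

lemma oprod_zero {N : ℕ} (g : ℕ → Matrix (Fin N) (Fin N) ℂ) : oprod g 0 = 1 := rfl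


variable (Y : ℕ → ℂ)

lemma oprod_fix (n : ℕ) {a : ℕ} (ha : a < 2*r)
    (hY : ∀ l, 1 ≤ l → l ≤ n → Y l ≠ 0)
    (h : ∀ i, 1 ≤ i → i ≤ n → ¬(a + 1 = i ∨ a + i + 1 = 2*r) ∧ ¬(a = i ∨ a + i = 2*r)) :
    (oprod (fun l => xmMat r l (Y l)) n).mulVec (vv r a) = vv r a := by
  induction n with
  | zero => rw [oprod_zero, Matrix.one_mulVec]
  | succ n ih =>
    rw [oprod_succ, ← Matrix.mulVec_mulVec,
      xm_mulVec (n+1) (Y (n+1)) (hY _ (by omega) le_rfl) ha,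
      if_neg (h (n+1) (by omega) le_rfl).1, if_neg (h (n+1) (by omega) le_rfl).2]
    exact ih (fun l h1 h2 => hY l h1 (by omega)) (fun i h1 h2 => h i h1 (by omega))

lemma sum_single_coe {a : ℕ} (ha : a < 2*r) (c : ℕ → ℂ) :
    ∑ b : Fin (2*r), (if (b:ℕ) = a then c (b:ℕ) else 0) • vv r (b:ℕ) = c a • vv r a := by
  rw [Finset.sum_eq_single (⟨a, ha⟩ : Fin (2*r))]
  · simp
  · intro b _ hb
    rw [if_neg (fun h => hb (Fin.ext h)), zero_smul]
  · simp

lemma F1 (hY0 : Y 0 = 1) (hYne : ∀ l, 1 ≤ l → l ≤ r → Y l ≠ 0)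
    {a : ℕ} (ha : a + 1 < r) :
    (oprod (fun l => xmMat r l (Y l)) r).mulVec (vv r a) =
      (Y a / Y (a+1)) • vv r a + vv r (a+1) := by
  have ha2 : a < 2*r := by omega
  have hpeel : ∀ n, a + 1 ≤ n → n ≤ r →
      (oprod (fun l => xmMat r l (Y l)) n).mulVec (vv r a) =
      (oprod (fun l => xmMat r l (Y l)) (a+1)).mulVec (vv r a) := by
    intro n hn hnr
    induction n, hn using Nat.le_induction with
    | base => rfl
    | succ n hn ih =>
      rw [oprod_succ, ← Matrix.mulVec_mulVec,
        xm_mulVec (n+1) (Y (n+1)) (hYne _ (by omega) (by omega)) ha2,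
        if_neg (by omega), if_neg (by omega)]
      exact ih (by omega)
  rw [hpeel r (by omega) le_rfl, oprod_succ, ← Matrix.mulVec_mulVec,
    xm_mulVec (a+1) (Y (a+1)) (hYne _ (by omega) (by omega)) ha2,
    if_pos (Or.inl rfl), Matrix.mulVec_add, Matrix.mulVec_smul]
  have h2 : (oprod (fun l => xmMat r l (Y l)) a).mulVec (vv r (a+1)) = vv r (a+1) :=
    oprod_fix Y a (by omega) (fun l h1 h2 => hYne l h1 (by omega))
      (fun i h1 h2 => ⟨by omega, by omega⟩)
  have h3 : (oprod (fun l => xmMat r l (Y l)) a).mulVec (vv r a) = Y a • vv r a := by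
    cases a with
    | zero => rw [oprod_zero, Matrix.one_mulVec, hY0, one_smul]
    | succ a' =>
      rw [oprod_succ, ← Matrix.mulVec_mulVec,
        xm_mulVec (a'+1) (Y (a'+1)) (hYne _ (by omega) (by omega)) ha2,
        if_neg (by omega), if_pos (Or.inl rfl), Matrix.mulVec_smul,
        oprod_fix Y a' (by omega) (fun l h1 h2 => hYne l h1 (by omega))
          (fun i h1 h2 => ⟨by omega, by omega⟩)]
  rw [h2, h3, smul_smul, div_eq_mul_inv, mul_comm (Y (a+1))⁻¹ (Y a)]

lemma Hbar (hY0 : Y 0 = 1) (hYne : ∀ l, 1 ≤ l → l ≤ r → Y l ≠ 0) :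
    ∀ k, k < r →
    (oprod (fun l => xmMat r l (Y l)) k).mulVec (vv r (2*r - k - 1)) =
      ∑ b : Fin (2*r), (if 2*r - k - 1 ≤ (b:ℕ) then (Y (2*r - (b:ℕ) - 1))⁻¹ else 0) • vv r (b:ℕ) := by
  intro k
  induction k with
  | zero =>
    intro hk
    rw [oprod_zero, Matrix.one_mulVec]
    simp only [Nat.sub_zero]
    have split : ∀ b : Fin (2*r),
        (if 2*r - 1 ≤ (b:ℕ) then (Y (2*r - (b:ℕ) - 1))⁻¹ else 0) • vv r (b:ℕ) =
        (if (b:ℕ) = 2*r - 1 then (Y (2*r - (b:ℕ) - 1))⁻¹ else 0) • vv r (b:ℕ) := by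
      intro b
      have hb := b.isLt
      by_cases h1 : (b:ℕ) = 2*r - 1
      · rw [if_pos (by omega), if_pos h1]
      · rw [if_neg (by omega), if_neg h1]
    rw [Finset.sum_congr rfl (fun b _ => split b),
      sum_single_coe (show 2*r-1 < 2*r by omega) (fun m => (Y (2*r - m - 1))⁻¹)]
    rw [show 2*r - (2*r-1) - 1 = 0 by omega, hY0, inv_one, one_smul]
  | succ k ih =>
    intro hk1
    have e1 : 2*r - (k+1) - 1 = 2*r - k - 2 := by omega
    have e2 : 2*r - k - 2 + 1 = 2*r - k - 1 := by omega
    rw [e1, oprod_succ, ← Matrix.mulVec_mulVec,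
      xm_mulVec (k+1) (Y (k+1)) (hYne _ (by omega) (by omega)) (show 2*r-k-2 < 2*r by omega),
      if_pos (Or.inr (by omega)), Matrix.mulVec_add, Matrix.mulVec_smul, e2,
      oprod_fix Y k (by omega) (fun l h1 h2 => hYne l h1 (by omega))
        (fun i h1 h2 => ⟨by omega, by omega⟩),
      ih (by omega)]
    have split : ∀ b : Fin (2*r),
        (if 2*r - k - 2 ≤ (b:ℕ) then (Y (2*r - (b:ℕ) - 1))⁻¹ else 0) • vv r (b:ℕ) =
        (if (b:ℕ) = 2*r - k - 2 then (Y (2*r - (b:ℕ) - 1))⁻¹ else 0) • vv r (b:ℕ) +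
        (if 2*r - k - 1 ≤ (b:ℕ) then (Y (2*r - (b:ℕ) - 1))⁻¹ else 0) • vv r (b:ℕ) := by
      intro b
      have hb := b.isLt
      by_cases h1 : (b:ℕ) = 2*r - k - 2
      · rw [if_pos (show 2*r - k - 2 ≤ (b:ℕ) by omega), if_pos h1,
          if_neg (show ¬(2*r - k - 1 ≤ (b:ℕ)) by omega), zero_smul, add_zero]
      · by_cases h2 : 2*r - k - 1 ≤ (b:ℕ)
        · rw [if_pos (show 2*r - k - 2 ≤ (b:ℕ) by omega), if_neg h1, if_pos h2,
            zero_smul, zero_add]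
        · rw [if_neg (show ¬(2*r - k - 2 ≤ (b:ℕ)) by omega), if_neg h1, if_neg h2,
            zero_smul]
          rw [add_zero]
    rw [Finset.sum_congr rfl (fun b _ => split b), Finset.sum_add_distrib,
      sum_single_coe (show 2*r-k-2 < 2*r by omega) (fun m => (Y (2*r - m - 1))⁻¹),
      show 2*r - (2*r-k-2) - 1 = k+1 by omega]

lemma F2 (hY0 : Y 0 = 1) (hYne : ∀ l, 1 ≤ l → l ≤ r → Y l ≠ 0)
    {a : ℕ} (ha1 : r ≤ a) (ha2 : a < 2*r) :
    (oprod (fun l => xmMat r l (Y l)) r).mulVec (vv r a) =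
      ∑ b : Fin (2*r), (if a ≤ (b:ℕ) then Y (2*r - a) / Y (2*r - (b:ℕ) - 1) else 0) • vv r (b:ℕ) := by
  obtain ⟨k, hka, hkr⟩ : ∃ k, a = 2*r - k - 1 ∧ k < r := ⟨2*r - a - 1, by omega, by omega⟩
  have hpeel : ∀ n, k + 1 ≤ n → n ≤ r →
      (oprod (fun l => xmMat r l (Y l)) n).mulVec (vv r a) =
      (oprod (fun l => xmMat r l (Y l)) (k+1)).mulVec (vv r a) := by
    intro n hn hnr
    induction n, hn using Nat.le_induction with
    | base => rfl
    | succ n hn ih =>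
      rw [oprod_succ, ← Matrix.mulVec_mulVec,
        xm_mulVec (n+1) (Y (n+1)) (hYne _ (by omega) (by omega)) ha2,
        if_neg (by omega), if_neg (by omega)]
      exact ih (by omega)
  rw [hpeel r (by omega) le_rfl, oprod_succ, ← Matrix.mulVec_mulVec,
    xm_mulVec (k+1) (Y (k+1)) (hYne _ (by omega) (by omega)) ha2,
    if_neg (by omega), if_pos (Or.inr (by omega)), Matrix.mulVec_smul, hka,
    Hbar Y hY0 hYne k hkr, show 2*r - (2*r-k-1) = k + 1 by omega, Finset.smul_sum]
  refine Finset.sum_congr rfl (fun b _ => ?_)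
  rw [smul_smul]
  by_cases h : 2*r - k - 1 ≤ (b:ℕ)
  · rw [if_pos h, if_pos h, div_eq_mul_inv]
  · rw [if_neg h, if_neg h, mul_zero]


end Aux


/- **Statement 7** (Lemma 6.10 (ii), case `i_δ < r`): expansion of
`Λ^d(X)(v_{i_1} ∧ ⋯ ∧ v_{i_d})` where `X = x_{-1}(Y_1)⋯x_{-r}(Y_r)`,
`i_1 < ⋯ < i_δ` unbarred with `i_δ < r` (nat encoding: `I ζ < r - 1`) and
`i_{δ+1}, …, i_d` barred (nat encoding: `r ≤ I ζ < 2r`).  Elements of `J` are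
encoded by 0-indexed naturals; for unbarred `i_ζ` the `J`-value is `I ζ + 1`,
for barred `i_ζ` we have `|i_ζ| = 2r - I ζ`. -/
open Classical in
theorem lambda_on_wedge_expansion_short
    (r : ℕ) (hr : 2 ≤ r) (Y : ℕ → ℂ) (hY0 : Y 0 = 1)
    (hYne : ∀ l, 1 ≤ l → l ≤ r → Y l ≠ 0)
    (d : ℕ) (hd1 : 1 ≤ d) (δ : ℕ) (hδ : δ ≤ d) (I : Fin d → ℕ)
    (hIu : ∀ ζ : Fin d, (ζ : ℕ) < δ → I ζ + 1 < r)
    (hIinc : ∀ ζ η : Fin d, (η : ℕ) < δ → ζ < η → I ζ < I η)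
    (hIb : ∀ ζ : Fin d, δ ≤ (ζ : ℕ) → r ≤ I ζ ∧ I ζ < 2*r) :
    (ExteriorAlgebra.map (Matrix.toLin' (oprod (fun l => xmMat r l (Y l)) r)))
      (ExteriorAlgebra.ιMulti ℂ d (fun ζ : Fin d => vv r (I ζ))) =
    ∑ Jf : Fin d → Fin (2*r),
      if ((∀ ζ : Fin d, (ζ : ℕ) < δ → ((Jf ζ : ℕ) = I ζ ∨ (Jf ζ : ℕ) = I ζ + 1)) ∧
          (∀ ζ η : Fin d, (η : ℕ) < δ → ζ < η → Jf ζ < Jf η) ∧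
          (∀ ζ : Fin d, δ ≤ (ζ : ℕ) → r ≤ (Jf ζ : ℕ) ∧ 2*r - (Jf ζ : ℕ) ≤ 2*r - I ζ))
      then (∏ ζ : Fin d,
              if (ζ : ℕ) < δ then Y (Jf ζ : ℕ) / Y (I ζ + 1)
              else Y (2*r - I ζ) / Y (2*r - (Jf ζ : ℕ) - 1)) •
            ExteriorAlgebra.ιMulti ℂ d (fun ζ : Fin d => vv r (Jf ζ : ℕ))
      else 0 := by
  classical
  set X := oprod (fun l => xmMat r l (Y l)) r with hXdef
  set c : Fin d → Fin (2*r) → ℂ := fun ζ b =>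
    if (ζ:ℕ) < δ then
      (if (b:ℕ) = I ζ then Y (I ζ) / Y (I ζ + 1) else if (b:ℕ) = I ζ + 1 then 1 else 0)
    else (if I ζ ≤ (b:ℕ) then Y (2*r - I ζ) / Y (2*r - (b:ℕ) - 1) else 0) with hc
  have hX : ∀ ζ : Fin d, (Matrix.toLin' X) (vv r (I ζ)) = ∑ b : Fin (2*r), c ζ b • vv r (b:ℕ) := by
    intro ζ
    rw [Matrix.toLin'_apply]
    by_cases hζ : (ζ:ℕ) < δ
    · have hu := hIu ζ hζ
      rw [F1 Y hY0 hYne hu]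
      have split : ∀ b : Fin (2*r), c ζ b • vv r (b:ℕ) =
          (if (b:ℕ) = I ζ then Y (I ζ) / Y (I ζ + 1) else 0) • vv r (b:ℕ) +
          (if (b:ℕ) = I ζ + 1 then (1:ℂ) else 0) • vv r (b:ℕ) := by
        intro b
        simp only [hc]
        rw [if_pos hζ]
        by_cases h1 : (b:ℕ) = I ζ
        · rw [if_pos h1, if_pos h1, if_neg (by omega), zero_smul, add_zero]
        · rw [if_neg h1, if_neg h1]
          by_cases h2 : (b:ℕ) = I ζ + 1
          · rw [if_pos h2, zero_smul, zero_add]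
          · rw [if_neg h2, zero_smul]
            rw [add_zero]
      rw [Finset.sum_congr rfl (fun b _ => split b), Finset.sum_add_distrib,
        sum_single_coe (show I ζ < 2*r by omega) (fun _ => Y (I ζ) / Y (I ζ + 1)),
        sum_single_coe (show I ζ + 1 < 2*r by omega) (fun _ => (1:ℂ)), one_smul]
    · have hb := hIb ζ (by omega)
      rw [F2 Y hY0 hYne hb.1 hb.2]
      refine Finset.sum_congr rfl (fun b _ => ?_)
      simp only [hc]
      rw [if_neg hζ]
  rw [ExteriorAlgebra.map_apply_ιMulti]
  have hcomp : ((Matrix.toLin' X) ∘ fun ζ : Fin d => vv r (I ζ)) =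
      fun ζ : Fin d => ∑ b : Fin (2*r), c ζ b • vv r (b:ℕ) := funext fun ζ => hX ζ
  rw [hcomp]
  have hms := MultilinearMap.map_sum
    (ExteriorAlgebra.ιMulti ℂ d (M := Fin (2*r) → ℂ)).toMultilinearMap
    (g := fun (ζ : Fin d) (b : Fin (2*r)) => c ζ b • vv r (b:ℕ))
  simp only [AlternatingMap.coe_multilinearMap] at hms
  rw [hms]
  refine Finset.sum_congr rfl (fun Jf _ => ?_)
  have hsm : (ExteriorAlgebra.ιMulti ℂ d) (fun ζ : Fin d => c ζ (Jf ζ) • vv r ((Jf ζ):ℕ)) =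
      (∏ ζ : Fin d, c ζ (Jf ζ)) • (ExteriorAlgebra.ιMulti ℂ d) (fun ζ : Fin d => vv r ((Jf ζ):ℕ)) := by
    have := MultilinearMap.map_smul_univ
      (ExteriorAlgebra.ιMulti ℂ d (M := Fin (2*r) → ℂ)).toMultilinearMap
      (fun ζ : Fin d => c ζ (Jf ζ)) (fun ζ : Fin d => vv r ((Jf ζ):ℕ))
    simpa using this
  rw [hsm]
  by_cases hC : ((∀ ζ : Fin d, (ζ : ℕ) < δ → ((Jf ζ : ℕ) = I ζ ∨ (Jf ζ : ℕ) = I ζ + 1)) ∧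
      (∀ ζ η : Fin d, (η : ℕ) < δ → ζ < η → Jf ζ < Jf η) ∧
      (∀ ζ : Fin d, δ ≤ (ζ : ℕ) → r ≤ (Jf ζ : ℕ) ∧ 2*r - (Jf ζ : ℕ) ≤ 2*r - I ζ))
  · rw [if_pos hC]
    obtain ⟨hA, hB, hC3⟩ := hC
    congr 1
    refine Finset.prod_congr rfl (fun ζ _ => ?_)
    simp only [hc]
    by_cases hζ : (ζ:ℕ) < δ
    · have hu := hIu ζ hζ
      rw [if_pos hζ, if_pos hζ]
      rcases hA ζ hζ with h | h
      · rw [if_pos h, h]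
      · rw [if_neg (by omega), if_pos h, h, div_self (hYne _ (by omega) (by omega))]
    · rw [if_neg hζ, if_neg hζ, if_pos ?_]
      have h3 := hC3 ζ (by omega)
      have hb := hIb ζ (by omega)
      have hlt := (Jf ζ).isLt
      omega
  · rw [if_neg hC]
    by_cases hA : ∀ ζ : Fin d, (ζ : ℕ) < δ → ((Jf ζ : ℕ) = I ζ ∨ (Jf ζ : ℕ) = I ζ + 1)
    · by_cases hC3 : ∀ ζ : Fin d, δ ≤ (ζ : ℕ) → r ≤ (Jf ζ : ℕ) ∧ 2*r - (Jf ζ : ℕ) ≤ 2*r - I ζ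
      · have hB : ¬ (∀ ζ η : Fin d, (η : ℕ) < δ → ζ < η → Jf ζ < Jf η) :=
          fun hB => hC ⟨hA, hB, hC3⟩
        push_neg at hB
        obtain ⟨ζ, η, hηδ, hζη, hge⟩ := hB
        have hζδ : (ζ:ℕ) < δ := lt_of_le_of_lt (le_of_lt hζη) hηδ
        have h1 := hA ζ hζδ
        have h2 := hA η hηδ
        have hI := hIinc ζ η hηδ hζη
        have hge' : (Jf η : ℕ) ≤ (Jf ζ : ℕ) := hge
        have heq : Jf ζ = Jf η := Fin.ext (by omega)
        have hz : (ExteriorAlgebra.ιMulti ℂ d) (fun ζ : Fin d => vv r ((Jf ζ):ℕ)) = 0 :=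
          AlternatingMap.map_eq_zero_of_eq _ _ (by rw [heq]) (ne_of_lt hζη)
        rw [hz, smul_zero]
      · push_neg at hC3
        obtain ⟨ζ, hδζ, hfail⟩ := hC3
        have hzero : c ζ (Jf ζ) = 0 := by
          have hb := hIb ζ hδζ
          have hlt := (Jf ζ).isLt
          simp only [hc]
          rw [if_neg (by omega), if_neg (by omega)]
        rw [Finset.prod_eq_zero (Finset.mem_univ ζ) hzero, zero_smul]
    · push_neg at hA
      obtain ⟨ζ, hζδ, h1, h2⟩ := hA
      have hzero : c ζ (Jf ζ) = 0 := by
        simp only [hc]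
        rw [if_pos hζδ, if_neg h1, if_neg h2]
      rw [Finset.prod_eq_zero (Finset.mem_univ ζ) hzero, zero_smul]


end CTypeMinors
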